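/- Rank-one characterization of the Calogero-Moser locus: let n ≥ 2, let x₁,…,x_n be distinct real numbers, B = diag(x₁,…,x_n), and let A ∈ Mat_n(ℝ) be such that the matrix K = [B,A] + I has rank 1. Then there exists an invertible diagonal matrix g ∈ GL(n,ℝ) such that every entry of g([B,A]+I)g⁻¹ equals 1; equivalently, (gAg⁻¹)_{ij} = 1/(x_i − x_j) for all i ≠ j. -/

import Mathlib

/- STATEMENT 11: rank-one characterization of the Calogero-Moser locus.
If n ≥ 2, B = diag(x₁,…,x_n) with the x_i distinct, and K = [B,A] + I has
rank 1, then there is an invertible diagonal matrix g such that all entries of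
g([B,A]+I)g⁻¹ equal 1; equivalently, (gAg⁻¹)_{ij} = 1/(x_i − x_j) for i ≠ j. -/

/-- The space of real n×n matrices. -/
abbrev Mat (n : ℕ) := Matrix (Fin n) (Fin n) ℝ

/-- Conjugation by the invertible diagonal matrix g = diag(d):  g A g⁻¹. -/
noncomputable def dconj {n : ℕ} (d : Fin n → ℝ) (A : Mat n) : Mat n :=
  Matrix.diagonal d * A * Matrix.diagonal (fun i => (d i)⁻¹)

theorem rank_one_calogero_moser_normal_form (n : ℕ) (hn : 2 ≤ n)
    (x : Fin n → ℝ) (hx : Function.Injective x)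
    (B : Mat n) (hB : B = Matrix.diagonal x) (A : Mat n)
    (hK : (B * A - A * B + 1).rank = 1) :
    ∃ d : Fin n → ℝ, (∀ i, d i ≠ 0) ∧
      (∀ i j : Fin n, dconj d (B * A - A * B + 1) i j = 1) ∧
      (∀ i j : Fin n, i ≠ j → dconj d A i j = 1 / (x i - x j)) := by
  haveI : NeZero n := ⟨by omega⟩
  set K : Mat n := B * A - A * B + 1 with hKdef
  -- entrywise formula for K
  have hKentry : ∀ i j, K i j = (x i - x j) * A i j + (if i = j then 1 else 0) := by
    intro i j
    simp [hKdef, hB, Matrix.sub_apply, Matrix.add_apply, Matrix.diagonal_mul,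
      Matrix.mul_diagonal, Matrix.one_apply]
    ring
  have hdiag : ∀ i, K i i = 1 := by
    intro i; rw [hKentry]; simp
  -- column 0 of K
  have hcol0mem : (fun i => K i 0) ∈ LinearMap.range K.mulVecLin := by
    refine ⟨Pi.single 0 1, ?_⟩
    ext i
    simp [Matrix.mulVecLin, Matrix.mulVec_single]
  have hcol0ne : (fun i => K i 0) ≠ 0 := by
    intro h
    have := congrFun h 0
    rw [hdiag] at this
    simpa using this
  -- range of mulVecLin equals span of column 0
  have hW : LinearMap.range K.mulVecLin = Submodule.span ℝ {(fun i => K i 0)} := by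
    symm
    apply Submodule.eq_of_le_of_finrank_le
    · rw [Submodule.span_le, Set.singleton_subset_iff]; exact hcol0mem
    · rw [finrank_span_singleton hcol0ne]
      exact le_of_eq hK
  -- every column of K is a multiple of column 0
  have hcols : ∀ j : Fin n, ∃ c : ℝ, ∀ i, K i j = c * K i 0 := by
    intro j
    have hmem : (fun i => K i j) ∈ LinearMap.range K.mulVecLin := by
      refine ⟨Pi.single j 1, ?_⟩
      ext i
      simp [Matrix.mulVecLin, Matrix.mulVec_single]
    rw [hW, Submodule.mem_span_singleton] at hmem
    obtain ⟨c, hc⟩ := hmem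
    exact ⟨c, fun i => by have := congrFun hc i; simpa [eq_comm, mul_comm] using this⟩
  choose c hc using hcols
  -- K i 0 ≠ 0 and c j * K j 0 = 1
  have hone : ∀ j, c j * K j 0 = 1 := by
    intro j
    rw [← hc j j]
    exact hdiag j
  have hK0ne : ∀ i, K i 0 ≠ 0 := by
    intro i h
    have h2 := hone i
    rw [h, mul_zero] at h2
    norm_num at h2
  have hP : ∀ i j, K i j * K j 0 = K i 0 := by
    intro i j
    rw [hc j i]
    linear_combination K i 0 * hone j
  refine ⟨fun i => (K i 0)⁻¹, fun i => inv_ne_zero (hK0ne i), ?_, ?_⟩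
  · intro i j
    have h1 : dconj (fun i => (K i 0)⁻¹) K i j = (K i 0)⁻¹ * K i j * K j 0 := by
      simp [dconj, Matrix.diagonal_mul, Matrix.mul_diagonal]
    rw [h1, mul_assoc, hP i j]
    exact inv_mul_cancel₀ (hK0ne i)
  · intro i j hij
    have hx' : x i - x j ≠ 0 := sub_ne_zero.mpr (fun h => hij (hx h))
    have hA : A i j = K i j / (x i - x j) := by
      rw [hKentry i j, if_neg hij]
      field_simp
      ring
    have h1 : dconj (fun i => (K i 0)⁻¹) A i j = (K i 0)⁻¹ * A i j * K j 0 := by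
      simp [dconj, Matrix.diagonal_mul, Matrix.mul_diagonal]
    rw [h1, hA]
    have h2 : (K i 0)⁻¹ * (K i j / (x i - x j)) * K j 0
        = ((K i 0)⁻¹ * (K i j * K j 0)) / (x i - x j) := by ring
    rw [h2, hP i j, inv_mul_cancel₀ (hK0ne i)]
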